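/- Let R be a commutative ring, n ≥ 1 a natural number, and let p, q ∈ (R[X])[Y] be bivariate polynomials all of whose Y-coefficients have X-degree less than n (i.e., for all j, ((p.coeff j).degree < n) and ((q.coeff j).degree < n)). Let φ : (R[X])[Y] → R[X] denote the Kronecker substitution Y ↦ X^{2n−1}, i.e., φ(h) = Polynomial.eval (Polynomial.X ^ (2n−1)) h. Then the coefficients of the product p·q can be read off from the univariate product φ(p)·φ(q): for every j and every i < 2n−1, ((p*q).coeff j).coeff i = (φ p * φ q).coeff ((2n−1)·j + i). -/

import Mathlib

open Polynomial

theorem kronecker_substitution_coeff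
    {R : Type*} [CommRing R] (n : ℕ) (hn : 1 ≤ n)
    (p q : Polynomial (Polynomial R))
    (hp : ∀ j, (p.coeff j).degree < (n : ℕ))
    (hq : ∀ j, (q.coeff j).degree < (n : ℕ))
    (φ : Polynomial (Polynomial R) → Polynomial R)
    (hφ : ∀ h, φ h = Polynomial.eval ((Polynomial.X : Polynomial R) ^ (2 * n - 1)) h)
    (j i : ℕ) (hi : i < 2 * n - 1) :
    ((p * q).coeff j).coeff i = (φ p * φ q).coeff ((2 * n - 1) * j + i) := by
  set N := 2 * n - 1 with hNdef
  have hN1 : 1 ≤ N := by omega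
  have hp' : ∀ a m, n ≤ m → (p.coeff a).coeff m = 0 := fun a m hm =>
    coeff_eq_zero_of_degree_lt (lt_of_lt_of_le (hp a) (by exact_mod_cast hm))
  have hq' : ∀ a m, n ≤ m → (q.coeff a).coeff m = 0 := fun a m hm =>
    coeff_eq_zero_of_degree_lt (lt_of_lt_of_le (hq a) (by exact_mod_cast hm))
  have key : ∀ k m, N ≤ m → ((p * q).coeff k).coeff m = 0 := by
    intro k m hm
    rw [coeff_mul, finset_sum_coeff]
    apply Finset.sum_eq_zero
    intro ab _
    rw [coeff_mul]
    apply Finset.sum_eq_zero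
    intro cd hcd
    rw [Finset.HasAntidiagonal.mem_antidiagonal] at hcd
    rcases le_or_gt n cd.1 with h | h
    · rw [hp' _ _ h, zero_mul]
    · rw [hq' _ _ (by omega), mul_zero]
  rw [hφ, hφ, ← eval_mul]
  set h := p * q with hhdef
  rw [eval_eq_sum_range, finset_sum_coeff]
  simp only [← pow_mul, coeff_mul_X_pow']
  have term_zero : ∀ k, k ≠ j →
      (if N * k ≤ N * j + i then (h.coeff k).coeff (N * j + i - N * k) else 0) = 0 := by
    intro k hkj
    rcases lt_or_gt_of_ne hkj with hlt | hgt
    · have h1 : N * (k + 1) ≤ N * j := Nat.mul_le_mul_left N hlt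
      rw [Nat.mul_add, Nat.mul_one] at h1
      rw [if_pos (by omega)]
      exact key _ _ (by omega)
    · have h1 : N * (j + 1) ≤ N * k := Nat.mul_le_mul_left N hgt
      rw [Nat.mul_add, Nat.mul_one] at h1
      rw [if_neg (by omega)]
  rcases le_or_gt j h.natDegree with hj | hj
  · rw [Finset.sum_eq_single_of_mem j (Finset.mem_range.mpr (by omega))
      (fun k _ hk => term_zero k hk)]
    rw [if_pos (Nat.le_add_right _ _), Nat.add_sub_cancel_left]
  · rw [Finset.sum_eq_zero (fun k hk => term_zero k (by
      rw [Finset.mem_range] at hk; omega))]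
    rw [coeff_eq_zero_of_natDegree_lt hj, coeff_zero]
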